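/- Let q ∈ ℝ with q ≠ -1, r₀ > 0, and let f : [r₀, ∞) → ℝ be a C¹ function satisfying f(r₀) = 0 and lim_{r→∞} r^{q+1} f(r)² = 0. Then ∫_{r₀}^∞ r^q f(r)² dr ≤ (4/(q+1)²) · ∫_{r₀}^∞ r^{q+2} (f'(r))² dr. -/

import Mathlib

open MeasureTheory Filter Set
open scoped ENNReal

/-- Elementary AM–GM step. -/
lemma hardy_amgm (e X Y : ℝ) (he : 0 < e) :
    X * Y ≤ e / 2 * X ^ 2 + 1 / (2 * e) * Y ^ 2 := by
  have h1 : X * Y ≤ (e ^ 2 * X ^ 2 + Y ^ 2) / (2 * e) := by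
    rw [le_div_iff₀ (by positivity)]
    nlinarith [sq_nonneg (e * X - Y)]
  have h2 : (e ^ 2 * X ^ 2 + Y ^ 2) / (2 * e) = e / 2 * X ^ 2 + 1 / (2 * e) * Y ^ 2 := by
    field_simp
  linarith [h1, h2.le]

/-- lintegral over `Ioi a` as a sup of lintegrals over `Ioc a (a+n)`. -/
lemma hardy_lintegral_Ioi_eq_iSup (a : ℝ) (g : ℝ → ℝ≥0∞) :
    ∫⁻ x in Set.Ioi a, g x = ⨆ n : ℕ, ∫⁻ x in Set.Ioc a (a + n), g x := by
  have hU : (⋃ n : ℕ, Set.Ioc (a + n) (a + (n + 1))) = Set.Ioi a := by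
    ext x
    simp only [Set.mem_iUnion, Set.mem_Ioc, Set.mem_Ioi]
    constructor
    · rintro ⟨n, h1, _⟩
      have : (0:ℝ) ≤ n := Nat.cast_nonneg n
      linarith
    · intro hx
      have hpos : 0 < x - a := by linarith
      refine ⟨⌈x - a⌉₊ - 1, ?_, ?_⟩
      · have h1 : (⌈x - a⌉₊ : ℝ) < (x - a) + 1 := Nat.ceil_lt_add_one hpos.le
        have h2 : 1 ≤ ⌈x - a⌉₊ := Nat.one_le_ceil_iff.2 hpos
        have : ((⌈x - a⌉₊ - 1 : ℕ) : ℝ) = (⌈x - a⌉₊ : ℝ) - 1 := by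
          push_cast [h2]; ring
        rw [this]; linarith
      · have h1 : x - a ≤ (⌈x - a⌉₊ : ℝ) := Nat.le_ceil _
        have h2 : 1 ≤ ⌈x - a⌉₊ := Nat.one_le_ceil_iff.2 hpos
        have : ((⌈x - a⌉₊ - 1 + 1 : ℕ) : ℝ) = (⌈x - a⌉₊ : ℝ) := by
          push_cast [h2]; ring
        rw [show ((⌈x - a⌉₊ - 1 : ℕ) : ℝ) + 1 = ((⌈x - a⌉₊ - 1 + 1 : ℕ) : ℝ) by push_cast; ring,
          this]
        linarith
  have hdisj : Pairwise (Function.onFun Disjoint fun n : ℕ => Set.Ioc (a + n) (a + (n + 1))) := by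
    intro m n hmn
    rcases hmn.lt_or_gt with h | h
    · simp only [Function.onFun, Set.Ioc_disjoint_Ioc]
      have : (m : ℝ) + 1 ≤ n := by exact_mod_cast h
      exact le_trans (min_le_left _ _) (le_trans (by linarith) (le_max_right _ _))
    · simp only [Function.onFun, Set.Ioc_disjoint_Ioc]
      have : (n : ℝ) + 1 ≤ m := by exact_mod_cast h
      exact le_trans (min_le_right _ _) (le_trans (by linarith) (le_max_left _ _))
  have hsum : ∀ N : ℕ, ∑ n ∈ Finset.range N, ∫⁻ x in Set.Ioc (a + n) (a + (n + 1)), g x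
      = ∫⁻ x in Set.Ioc a (a + N), g x := by
    intro N
    induction N with
    | zero => simp
    | succ N ih =>
      rw [Finset.sum_range_succ, ih]
      have hle1 : a ≤ a + (N : ℝ) := by
        have : (0:ℝ) ≤ N := Nat.cast_nonneg N
        linarith
      have hle2 : a + (N : ℝ) ≤ a + ((N : ℝ) + 1) := by linarith
      rw [← lintegral_union measurableSet_Ioc (Set.Ioc_disjoint_Ioc_of_le le_rfl),
        Set.Ioc_union_Ioc_eq_Ioc hle1 hle2]
      push_cast
      ring_nf
  rw [← hU, lintegral_iUnion (fun _ => measurableSet_Ioc) hdisj, ENNReal.tsum_eq_iSup_nat]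
  exact iSup_congr hsum

/-- Weighted Hardy inequality on a half-line (Lemma 4.1(i) of the paper). -/
theorem weighted_hardy_inequality (q r₀ : ℝ) (hq : q ≠ -1) (hr₀ : 0 < r₀)
    (f f' : ℝ → ℝ)
    (hderiv : ∀ r ∈ Set.Ici r₀, HasDerivAt f (f' r) r)
    (hcont : ContinuousOn f' (Set.Ici r₀))
    (hf0 : f r₀ = 0)
    (hlim : Tendsto (fun r : ℝ => r ^ (q + 1) * (f r) ^ 2) atTop (nhds 0)) :
    ∫⁻ r in Set.Ioi r₀, ENNReal.ofReal (r ^ q * (f r) ^ 2) ≤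
      ENNReal.ofReal (4 / (q + 1) ^ 2) *
        ∫⁻ r in Set.Ioi r₀, ENNReal.ofReal (r ^ (q + 2) * (f' r) ^ 2) := by
  set c : ℝ := |q + 1| with hc_def
  have hc : 0 < c := abs_pos.2 (by intro h; apply hq; linarith)
  -- continuity of f on Ici r₀
  have hfc : ContinuousOn f (Set.Ici r₀) := fun x hx =>
    ((hderiv x hx).continuousAt).continuousWithinAt
  -- continuity of the weight functions
  have hrp : ∀ p : ℝ, ContinuousOn (fun r : ℝ => r ^ p) (Set.Ici r₀) := by
    intro p x hx
    exact (Real.continuousAt_rpow_const x p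
      (Or.inl (ne_of_gt (lt_of_lt_of_le hr₀ hx)))).continuousWithinAt
  -- the key real inequality on finite intervals
  have key : ∀ R : ℝ, r₀ ≤ R →
      (∫ r in r₀..R, r ^ q * f r ^ 2) ≤
        2 / c * (R ^ (q + 1) * f R ^ 2) +
          4 / (q + 1) ^ 2 * ∫ r in r₀..R, r ^ (q + 2) * f' r ^ 2 := by
    intro R hR
    have hIcc : Set.Icc r₀ R ⊆ Set.Ici r₀ := fun x hx => hx.1
    have huIcc : Set.uIcc r₀ R = Set.Icc r₀ R := Set.uIcc_of_le hR
    have hposIcc : ∀ x ∈ Set.Icc r₀ R, 0 < x := fun x hx => lt_of_lt_of_le hr₀ hx.1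
    -- continuities on Icc
    have hfc' : ContinuousOn f (Set.Icc r₀ R) := hfc.mono hIcc
    have hcont' : ContinuousOn f' (Set.Icc r₀ R) := hcont.mono hIcc
    have hrp' : ∀ p : ℝ, ContinuousOn (fun r : ℝ => r ^ p) (Set.Icc r₀ R) :=
      fun p => (hrp p).mono hIcc
    -- FTC
    have hFTC : (∫ r in r₀..R,
        ((q + 1) * r ^ q * f r ^ 2 + r ^ (q + 1) * (2 * f r * f' r)))
        = R ^ (q + 1) * f R ^ 2 := by
      have := intervalIntegral.integral_eq_sub_of_hasDerivAt
        (f := fun r : ℝ => r ^ (q + 1) * f r ^ 2)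
        (f' := fun r : ℝ => (q + 1) * r ^ q * f r ^ 2 + r ^ (q + 1) * (2 * f r * f' r))
        (a := r₀) (b := R) ?_ ?_
      · rw [this, hf0]; ring
      · intro x hx
        rw [huIcc] at hx
        have hx0 : x ≠ 0 := ne_of_gt (hposIcc x hx)
        have h1 : HasDerivAt (fun r : ℝ => r ^ (q + 1)) ((q + 1) * x ^ q) x := by
          have := Real.hasDerivAt_rpow_const (x := x) (p := q + 1) (Or.inl hx0)
          simpa [add_sub_cancel_right] using this
        have h2 : HasDerivAt (fun r : ℝ => f r ^ 2) (2 * f x * f' x) x := by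
          simpa [pow_one] using (hderiv x (hIcc hx)).fun_pow 2
        exact h1.mul h2
      · apply ContinuousOn.intervalIntegrable
        rw [huIcc]
        exact ((continuousOn_const.mul (hrp' q)).mul (hfc'.pow 2)).add
          ((hrp' (q + 1)).mul ((continuousOn_const.mul hfc').mul hcont'))
    -- integrabilities
    have hintA : IntervalIntegrable (fun r : ℝ => r ^ q * f r ^ 2) volume r₀ R := by
      apply ContinuousOn.intervalIntegrable; rw [huIcc]
      exact (hrp' q).mul (hfc'.pow 2)
    have hintB : IntervalIntegrable (fun r : ℝ => r ^ (q + 2) * f' r ^ 2) volume r₀ R := by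
      apply ContinuousOn.intervalIntegrable; rw [huIcc]
      exact (hrp' (q + 2)).mul (hcont'.pow 2)
    have hintD : IntervalIntegrable (fun r : ℝ => r ^ (q + 1) * (f r * f' r)) volume r₀ R := by
      apply ContinuousOn.intervalIntegrable; rw [huIcc]
      exact (hrp' (q + 1)).mul (hfc'.mul hcont')
    set A : ℝ := ∫ r in r₀..R, r ^ q * f r ^ 2 with hA_def
    set B : ℝ := ∫ r in r₀..R, r ^ (q + 2) * f' r ^ 2 with hB_def
    set D : ℝ := ∫ r in r₀..R, r ^ (q + 1) * (f r * f' r) with hD_def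
    set ε : ℝ := R ^ (q + 1) * f R ^ 2 with hε_def
    -- split the FTC integral
    have hsplit : (q + 1) * A + 2 * D = ε := by
      have h1 : (∫ r in r₀..R,
          ((q + 1) * r ^ q * f r ^ 2 + r ^ (q + 1) * (2 * f r * f' r)))
          = (∫ r in r₀..R, (q + 1) * (r ^ q * f r ^ 2))
            + ∫ r in r₀..R, 2 * (r ^ (q + 1) * (f r * f' r)) := by
        rw [← intervalIntegral.integral_add (hintA.const_mul _) (hintD.const_mul _)]
        apply intervalIntegral.integral_congr
        intro x hx; ring
      rw [intervalIntegral.integral_const_mul, intervalIntegral.integral_const_mul] at h1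
      rw [hA_def, hD_def, ← hFTC, h1]
    -- nonnegativity
    have hAnn : 0 ≤ A := intervalIntegral.integral_nonneg hR (fun x hx =>
      mul_nonneg (Real.rpow_nonneg (hposIcc x hx).le _) (sq_nonneg _))
    have hBnn : 0 ≤ B := intervalIntegral.integral_nonneg hR (fun x hx =>
      mul_nonneg (Real.rpow_nonneg (hposIcc x hx).le _) (sq_nonneg _))
    have hεnn : 0 ≤ ε := mul_nonneg (Real.rpow_nonneg (by linarith) _) (sq_nonneg _)
    -- pointwise bound for the cross term
    have hW : ∀ x ∈ Set.Icc r₀ R, |x ^ (q + 1) * (f x * f' x)| ≤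
        c / 4 * (x ^ q * f x ^ 2) + 1 / c * (x ^ (q + 2) * f' x ^ 2) := by
      intro x hx
      have hx0 : 0 < x := hposIcc x hx
      set X : ℝ := x ^ (q / 2) * |f x| with hX_def
      set Y : ℝ := x ^ ((q + 2) / 2) * |f' x| with hY_def
      have hX2 : X ^ 2 = x ^ q * f x ^ 2 := by
        rw [hX_def, mul_pow, sq_abs, sq, ← Real.rpow_add hx0,
          show q / 2 + q / 2 = q by ring]
      have hY2 : Y ^ 2 = x ^ (q + 2) * f' x ^ 2 := by
        rw [hY_def, mul_pow, sq_abs, sq, ← Real.rpow_add hx0,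
          show (q + 2) / 2 + (q + 2) / 2 = q + 2 by ring]
      have hXY : X * Y = x ^ (q + 1) * (|f x| * |f' x|) := by
        rw [hX_def, hY_def, show x ^ (q / 2) * |f x| * (x ^ ((q + 2) / 2) * |f' x|)
          = (x ^ (q / 2) * x ^ ((q + 2) / 2)) * (|f x| * |f' x|) by ring,
          ← Real.rpow_add hx0, show q / 2 + (q + 2) / 2 = q + 1 by ring]
      have habs : |x ^ (q + 1) * (f x * f' x)| = x ^ (q + 1) * (|f x| * |f' x|) := by
        rw [abs_mul, abs_mul, abs_of_pos (Real.rpow_pos_of_pos hx0 _)]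
      have hkey := hardy_amgm (c / 2) X Y (by positivity)
      rw [habs, ← hXY]
      calc X * Y ≤ c / 2 / 2 * X ^ 2 + 1 / (2 * (c / 2)) * Y ^ 2 := hkey
        _ = c / 4 * (x ^ q * f x ^ 2) + 1 / c * (x ^ (q + 2) * f' x ^ 2) := by
            rw [hX2, hY2]; ring_nf
    -- bound on |D|
    have hD : |D| ≤ c / 4 * A + 1 / c * B := by
      have h1 : |D| ≤ ∫ r in r₀..R, |r ^ (q + 1) * (f r * f' r)| :=
        intervalIntegral.abs_integral_le_integral_abs hR
      have h2 : (∫ r in r₀..R, |r ^ (q + 1) * (f r * f' r)|) ≤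
          ∫ r in r₀..R, (c / 4 * (r ^ q * f r ^ 2) + 1 / c * (r ^ (q + 2) * f' r ^ 2)) := by
        apply intervalIntegral.integral_mono_on hR hintD.abs
          ((hintA.const_mul _).add (hintB.const_mul _)) hW
      have h3 : (∫ r in r₀..R,
          (c / 4 * (r ^ q * f r ^ 2) + 1 / c * (r ^ (q + 2) * f' r ^ 2)))
          = c / 4 * A + 1 / c * B := by
        rw [hA_def, hB_def, ← intervalIntegral.integral_const_mul,
          ← intervalIntegral.integral_const_mul,
          ← intervalIntegral.integral_add (hintA.const_mul _) (hintB.const_mul _)]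
      linarith
    -- combine
    have hstep : c * A ≤ ε + c / 2 * A + 2 / c * B := by
      have h1 : c * A = |(q + 1) * A| := by
        rw [abs_mul, abs_of_nonneg hAnn, hc_def]
      have h2 : |(q + 1) * A| = |ε - 2 * D| := by rw [← hsplit]; ring_nf
      have h3 : |ε - 2 * D| ≤ ε + 2 * |D| := by
        have := abs_sub (ε) (2 * D)
        calc |ε - 2 * D| ≤ |ε| + |2 * D| := abs_sub _ _
          _ = ε + 2 * |D| := by rw [abs_of_nonneg hεnn, abs_mul]; norm_num
      have h4 : ε + 2 * |D| ≤ ε + 2 * (c / 4 * A + 1 / c * B) := by linarith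
      have h5 : ε + 2 * (c / 4 * A + 1 / c * B) = ε + c / 2 * A + 2 / c * B := by ring
      linarith [h1.le, h2.le, h3, h4, h5.le]
    -- solve for A
    have hc2 : c ^ 2 = (q + 1) ^ 2 := sq_abs _
    have h6 : c / 2 * A ≤ ε + 2 / c * B := by linarith
    have h7 : A ≤ 2 / c * ε + 4 / c ^ 2 * B := by
      have h8 : A = 2 / c * (c / 2 * A) := by field_simp
      have h9 : 2 / c * (c / 2 * A) ≤ 2 / c * (ε + 2 / c * B) :=
        mul_le_mul_of_nonneg_left h6 (by positivity)
      have h10 : 2 / c * (ε + 2 / c * B) = 2 / c * ε + 4 / c ^ 2 * B := by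
        field_simp; ring
      linarith [h8.le, h9, h10.le]
    rw [hc2] at h7
    exact h7
  -- convert interval integrals to lintegrals
  have hconv : ∀ (p : ℝ) (g : ℝ → ℝ), ContinuousOn g (Set.Ici r₀) → ∀ R : ℝ, r₀ ≤ R →
      ENNReal.ofReal (∫ r in r₀..R, r ^ p * g r ^ 2)
        = ∫⁻ r in Set.Ioc r₀ R, ENNReal.ofReal (r ^ p * g r ^ 2) := by
    intro p g hg R hR
    rw [intervalIntegral.integral_of_le hR]
    rw [MeasureTheory.ofReal_integral_eq_lintegral_ofReal]
    · apply MeasureTheory.IntegrableOn.mono_set _ Set.Ioc_subset_Icc_self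
      apply ContinuousOn.integrableOn_Icc
      refine ((hrp p).mono ?_).mul ((hg.mono ?_).pow 2) <;> exact fun x hx => hx.1
    · refine (ae_restrict_iff' measurableSet_Ioc).2 (Filter.Eventually.of_forall ?_)
      intro x hx
      exact mul_nonneg (Real.rpow_nonneg (lt_of_lt_of_le hr₀ hx.1.le).le _) (sq_nonneg _)
  set J : ℝ≥0∞ := ∫⁻ r in Set.Ioi r₀, ENNReal.ofReal (r ^ (q + 2) * f' r ^ 2) with hJ_def
  rw [hardy_lintegral_Ioi_eq_iSup]
  refine iSup_le fun n => ?_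
  -- bound for every m ≥ n
  have hmain : ∀ m : ℕ, n ≤ m →
      (∫⁻ x in Set.Ioc r₀ (r₀ + n), ENNReal.ofReal (x ^ q * f x ^ 2))
        ≤ ENNReal.ofReal (2 / c * ((r₀ + m) ^ (q + 1) * f (r₀ + m) ^ 2))
          + ENNReal.ofReal (4 / (q + 1) ^ 2) * J := by
    intro m hm
    have hRm : r₀ ≤ r₀ + (m : ℝ) := by
      have : (0:ℝ) ≤ m := Nat.cast_nonneg m
      linarith
    have hεm : 0 ≤ (r₀ + m) ^ (q + 1) * f (r₀ + m) ^ 2 :=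
      mul_nonneg (Real.rpow_nonneg (by linarith) _) (sq_nonneg _)
    have hBm : 0 ≤ ∫ r in r₀..(r₀ + m), r ^ (q + 2) * f' r ^ 2 :=
      intervalIntegral.integral_nonneg hRm (fun x hx =>
        mul_nonneg (Real.rpow_nonneg (lt_of_lt_of_le hr₀ hx.1).le _) (sq_nonneg _))
    calc (∫⁻ x in Set.Ioc r₀ (r₀ + n), ENNReal.ofReal (x ^ q * f x ^ 2))
        ≤ ∫⁻ x in Set.Ioc r₀ (r₀ + m), ENNReal.ofReal (x ^ q * f x ^ 2) := by
          apply lintegral_mono_set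
          apply Set.Ioc_subset_Ioc_right
          have : (n : ℝ) ≤ m := Nat.cast_le.2 hm
          linarith
      _ = ENNReal.ofReal (∫ r in r₀..(r₀ + m), r ^ q * f r ^ 2) :=
          (hconv q f hfc _ hRm).symm
      _ ≤ ENNReal.ofReal (2 / c * ((r₀ + m) ^ (q + 1) * f (r₀ + m) ^ 2)
            + 4 / (q + 1) ^ 2 * ∫ r in r₀..(r₀ + m), r ^ (q + 2) * f' r ^ 2) :=
          ENNReal.ofReal_le_ofReal (key _ hRm)
      _ ≤ ENNReal.ofReal (2 / c * ((r₀ + m) ^ (q + 1) * f (r₀ + m) ^ 2))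
            + ENNReal.ofReal (4 / (q + 1) ^ 2 * ∫ r in r₀..(r₀ + m), r ^ (q + 2) * f' r ^ 2) :=
          ENNReal.ofReal_add_le
      _ ≤ ENNReal.ofReal (2 / c * ((r₀ + m) ^ (q + 1) * f (r₀ + m) ^ 2))
            + ENNReal.ofReal (4 / (q + 1) ^ 2) * J := by
          gcongr
          rw [ENNReal.ofReal_mul (by positivity), hconv (q + 2) f' hcont _ hRm]
          gcongr
          exact lintegral_mono_set Set.Ioc_subset_Ioi_self
  -- pass to the limit in m
  have htend : Tendsto (fun m : ℕ =>
      ENNReal.ofReal (2 / c * ((r₀ + m) ^ (q + 1) * f (r₀ + m) ^ 2))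
        + ENNReal.ofReal (4 / (q + 1) ^ 2) * J) atTop
      (nhds (0 + ENNReal.ofReal (4 / (q + 1) ^ 2) * J)) := by
    apply Tendsto.add _ tendsto_const_nhds
    have h1 : Tendsto (fun m : ℕ => (r₀ + (m : ℝ))) atTop atTop :=
      tendsto_atTop_add_const_left _ _ tendsto_natCast_atTop_atTop
    have h2 : Tendsto (fun m : ℕ => (r₀ + m) ^ (q + 1) * f (r₀ + m) ^ 2) atTop (nhds 0) :=
      hlim.comp h1
    have h3 : Tendsto (fun m : ℕ => 2 / c * ((r₀ + m) ^ (q + 1) * f (r₀ + m) ^ 2))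
        atTop (nhds 0) := by
      simpa using h2.const_mul (2 / c)
    have := (ENNReal.continuous_ofReal.tendsto 0).comp h3
    rw [ENNReal.ofReal_zero] at this
    exact this
  rw [zero_add] at htend
  exact ge_of_tendsto htend (Filter.eventually_atTop.2 ⟨n, hmain⟩)
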